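/- In the 1-dimensional noisy response model, assume additionally that there are continuous functions l, u : ℝ → ℝ with l(x) < x < u(x), c(l(x), x) = 1, and c(x, u(x)) = 1 for all x, and that the base distribution D_B on ℝ × {0,1} has, for each label y ∈ {0,1}, a continuous, strictly positive, Lebesgue-integrable density g_y (that is, D_B(A × {y}) = ∫_A g_y dx). Fix σ > 0 and θ ∈ ℝ. Then for each y ∈ {0,1} the measure A ↦ D_σ(θ)(A × {y}) is absolutely continuous with respect to Lebesgue measure, with density p(θ, x', y) = g_y(x') · ν_σ({η ∈ ℝ : η ≤ x' − θ or η > u(x') − θ}) + φ_σ(x' − θ) · ∫_{l(x')}^{x'} g_y(t) dt, where ν_σ is the Gaussian measure N(0,σ²) and φ_σ is its density; moreover p(θ, x', y) is strictly positive and jointly continuous in (θ, x'). -/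

import Mathlib

open MeasureTheory Set ProbabilityTheory
open scoped NNReal ENNReal

/-- Response of an agent with features `x` to a perceived threshold `t` (utility of
positive classification γ = 1). -/
noncomputable def respond (c : ℝ → ℝ → ℝ) (x t : ℝ) : ℝ :=
  if t ≤ x then x else if c x t ≤ 1 then t else x

/-- The noisy-response distribution map in one dimension: the pushforward of the base
distribution tensored with Gaussian perception noise N(0,σ²) under
((x,y),η) ↦ (respond(x, θ+η), y). -/
noncomputable def noisyD (c : ℝ → ℝ → ℝ) (DB : Measure (ℝ × Bool)) (σ θ : ℝ) :
    Measure (ℝ × Bool) :=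
  Measure.map (fun q : (ℝ × Bool) × ℝ => (respond c q.1.1 (θ + q.2), q.1.2))
    (DB.prod (gaussianReal 0 ⟨σ ^ 2, sq_nonneg σ⟩))

/-- The claimed density of the noisy-response distribution at `(x', y)` when the deployed
threshold is `θ`: agents with true features `x'` who keep their features, plus agents in
`[l(x'), x']` who move to the perceived threshold `x'`. -/
noncomputable def nrDens (g : Bool → ℝ → ℝ) (l u : ℝ → ℝ) (σ : ℝ)
    (θ x' : ℝ) (y : Bool) : ℝ :=
  g y x' *
      (gaussianReal 0 ⟨σ ^ 2, sq_nonneg σ⟩ {η : ℝ | η ≤ x' - θ ∨ u x' - θ < η}).toReal +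
    gaussianPDFReal 0 ⟨σ ^ 2, sq_nonneg σ⟩ (x' - θ) * ∫ t in (l x')..x', g y t

lemma cont_primitive2 {α : Type*} [TopologicalSpace α] {f : ℝ → ℝ} (hf : Continuous f)
    {a b : α → ℝ} (ha : Continuous a) (hb : Continuous b) :
    Continuous fun x : α => ∫ t in a x..b x, f t := by
  have h : ∀ p q : ℝ, (∫ t in p..q, f t)
      = (∫ t in (0:ℝ)..q, f t) - ∫ t in (0:ℝ)..p, f t := by
    intro p q
    rw [← intervalIntegral.integral_add_adjacent_intervals (a := 0) (b := p) (c := q)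
      (hf.intervalIntegrable _ _) (hf.intervalIntegrable _ _)]
    ring
  have h2 : (fun x : α => ∫ t in a x..b x, f t)
      = fun x : α => (∫ t in (0:ℝ)..b x, f t) - ∫ t in (0:ℝ)..a x, f t :=
    funext fun x => h (a x) (b x)
  rw [h2]
  have hF : Continuous fun x : ℝ => ∫ t in (0:ℝ)..x, f t :=
    intervalIntegral.continuous_primitive (fun p q => hf.intervalIntegrable p q) 0
  exact (hF.comp hb).sub (hF.comp ha)

lemma cont_gaussianPDFReal (μ : ℝ) (v : ℝ≥0) : Continuous (gaussianPDFReal μ v) := by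
  rw [gaussianPDFReal_def]
  exact continuous_const.mul (Real.continuous_exp.comp
    (Continuous.div_const (((continuous_id.sub continuous_const).pow 2)).neg _))

lemma gauss_compl (v : ℝ≥0) (hv : v ≠ 0) {a b : ℝ} (hab : a ≤ b) :
    ((gaussianReal 0 v) {η : ℝ | η ≤ a ∨ b < η}).toReal
      = 1 - ∫ t in a..b, gaussianPDFReal 0 v t := by
  have hset : {η : ℝ | η ≤ a ∨ b < η} = (Set.Ioc a b)ᶜ := by
    ext η; simp only [mem_setOf_eq, mem_compl_iff, Set.mem_Ioc, not_and_or, not_lt, not_le]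
  rw [hset, measure_compl measurableSet_Ioc (measure_ne_top _ _), measure_univ,
    gaussianReal_apply_eq_integral 0 hv, ← intervalIntegral.integral_of_le hab,
    ENNReal.toReal_sub_of_le ?h1 ENNReal.one_ne_top, ENNReal.toReal_one,
    ENNReal.toReal_ofReal (intervalIntegral.integral_nonneg hab
      (fun t _ => gaussianPDFReal_nonneg _ _ _))]
  case h1 =>
    rw [intervalIntegral.integral_of_le hab, ← gaussianReal_apply_eq_integral 0 hv]
    exact prob_le_one

lemma cont_W (u : ℝ → ℝ) (hu : Continuous u) (hux : ∀ x, x < u x) (v : ℝ≥0) (hv : v ≠ 0) :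
    Continuous fun p : ℝ × ℝ =>
      ((gaussianReal 0 v) {η : ℝ | η ≤ p.2 - p.1 ∨ u p.2 - p.1 < η}).toReal := by
  have h : (fun p : ℝ × ℝ =>
      ((gaussianReal 0 v) {η : ℝ | η ≤ p.2 - p.1 ∨ u p.2 - p.1 < η}).toReal)
      = fun p : ℝ × ℝ => 1 - ∫ t in (p.2 - p.1)..(u p.2 - p.1), gaussianPDFReal 0 v t :=
    funext fun p => gauss_compl v hv (by linarith [hux p.2])
  rw [h]
  exact continuous_const.sub (cont_primitive2 (cont_gaussianPDFReal 0 v)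
    (continuous_snd.sub continuous_fst) ((hu.comp continuous_snd).sub continuous_fst))

section resp

variable {c : ℝ → ℝ → ℝ} {l u : ℝ → ℝ}
variable (hc_between : ∀ x xP z : ℝ, min x xP < z → z < max x xP →
      c x z < c x xP ∧ c z x < c xP x)
variable (hlu : ∀ x, l x < x ∧ x < u x ∧ c (l x) x = 1 ∧ c x (u x) = 1)

include hc_between hlu in
lemma cost_iff_l {x t : ℝ} (hxt : x < t) : c x t ≤ 1 ↔ l t ≤ x := by
  obtain ⟨hl, _, hcl, _⟩ := hlu t
  constructor
  · intro h
    by_contra hx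
    push_neg at hx
    have H := hc_between t x (l t) (min_lt_iff.mpr (Or.inr hx)) (lt_max_iff.mpr (Or.inl hl))
    linarith [H.2]
  · intro h
    rcases eq_or_lt_of_le h with heq | h'
    · rw [← heq]
      exact hcl.le
    · have H := hc_between t (l t) x (min_lt_iff.mpr (Or.inr h')) (lt_max_iff.mpr (Or.inl hxt))
      linarith [H.2]

include hc_between hlu in
lemma cost_iff_u {x t : ℝ} (hxt : x < t) : c x t ≤ 1 ↔ t ≤ u x := by
  obtain ⟨_, hux, _, hcu⟩ := hlu x
  constructor
  · intro h
    by_contra ht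
    push_neg at ht
    have H := hc_between x t (u x) (min_lt_iff.mpr (Or.inl hux)) (lt_max_iff.mpr (Or.inr ht))
    linarith [H.1]
  · intro h
    rcases eq_or_lt_of_le h with heq | h'
    · rw [heq]
      exact hcu.le
    · have H := hc_between x (u x) t (min_lt_iff.mpr (Or.inl hxt)) (lt_max_iff.mpr (Or.inr h'))
      linarith [H.1]

include hc_between hlu in
lemma respond_eq (x t : ℝ) : respond c x t = if l t ≤ x ∧ x < t then t else x := by
  unfold respond
  by_cases h1 : t ≤ x
  · rw [if_pos h1, if_neg (fun h => absurd h.2 (not_lt.mpr h1))]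
  · push_neg at h1
    rw [if_neg (not_le.mpr h1)]
    by_cases h2 : c x t ≤ 1
    · rw [if_pos h2, if_pos ⟨(cost_iff_l hc_between hlu h1).mp h2, h1⟩]
    · rw [if_neg h2, if_neg (fun h => h2 ((cost_iff_l hc_between hlu h1).mpr h.1))]

include hc_between hlu in
lemma stay_iff (x t : ℝ) : ¬(l t ≤ x ∧ x < t) ↔ (t ≤ x ∨ u x < t) := by
  by_cases h1 : x < t
  · constructor
    · intro h
      right
      by_contra hu'
      push_neg at hu'
      exact h ⟨(cost_iff_l hc_between hlu h1).mp ((cost_iff_u hc_between hlu h1).mpr hu'), h1⟩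
    · rintro (h | h) hc
      · linarith
      · exact absurd ((cost_iff_u hc_between hlu h1).mp
          ((cost_iff_l hc_between hlu h1).mpr hc.1)) (not_le.mpr h)
  · constructor
    · intro _
      exact Or.inl (not_lt.mp h1)
    · intro _ h
      exact h1 h.2

end resp
/-- Proposition 8 (noisy response induces a continuous aggregate response):
in the 1-dimensional noisy response model the induced distribution has, for each label, a
strictly positive density w.r.t. Lebesgue measure that is jointly continuous in the
deployed threshold and the features. -/
theorem stmt12 (c : ℝ → ℝ → ℝ) (hc_cont : Continuous fun p : ℝ × ℝ => c p.1 p.2)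
    (hc_zero : ∀ x, c x x = 0)
    (hc_between : ∀ x xP z : ℝ, min x xP < z → z < max x xP →
      c x z < c x xP ∧ c z x < c xP x)
    (l u : ℝ → ℝ) (hl_cont : Continuous l) (hu_cont : Continuous u)
    (hlu : ∀ x, l x < x ∧ x < u x ∧ c (l x) x = 1 ∧ c x (u x) = 1)
    (g : Bool → ℝ → ℝ) (hg_cont : ∀ y, Continuous (g y)) (hg_pos : ∀ y x, 0 < g y x)
    (hg_int : ∀ y, Integrable (g y))
    (DB : Measure (ℝ × Bool)) [IsProbabilityMeasure DB]
    (hDB : ∀ (y : Bool) (A : Set ℝ), MeasurableSet A →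
      DB (A ×ˢ ({y} : Set Bool)) = ENNReal.ofReal (∫ x in A, g y x))
    (σ : ℝ) (hσ : 0 < σ) (θ : ℝ) :
    (∀ (y : Bool) (A : Set ℝ), MeasurableSet A →
      noisyD c DB σ θ (A ×ˢ ({y} : Set Bool)) =
        ENNReal.ofReal (∫ x' in A, nrDens g l u σ θ x' y)) ∧
    (∀ (y : Bool) (ϑ x' : ℝ), 0 < nrDens g l u σ ϑ x' y) ∧
    (∀ y : Bool, Continuous fun p : ℝ × ℝ => nrDens g l u σ p.1 p.2 y) := by
  have hv : (⟨σ ^ 2, sq_nonneg σ⟩ : ℝ≥0) ≠ 0 := by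
    intro h
    have h2 : σ ^ 2 = 0 := congrArg (fun x : ℝ≥0 => (x : ℝ)) h
    exact hσ.ne' (by nlinarith)
  refine ⟨?_, ?_, ?_⟩
  · -- density formula
    intro y A hA
    set v : ℝ≥0 := ⟨σ ^ 2, sq_nonneg σ⟩ with hvdef
    set ν : Measure ℝ := gaussianReal 0 v with hνdef
    -- measurability of the response map
    have hrm : Measurable fun p : ℝ × ℝ => respond c p.1 p.2 := by
      unfold respond
      refine Measurable.ite (measurableSet_le measurable_snd measurable_fst) measurable_fst ?_
      exact Measurable.ite (measurableSet_le hc_cont.measurable measurable_const)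
        measurable_snd measurable_fst
    have hf : Measurable fun q : (ℝ × Bool) × ℝ => (respond c q.1.1 (θ + q.2), q.1.2) := by
      refine Measurable.prodMk ?_ (measurable_snd.comp measurable_fst)
      exact hrm.comp ((measurable_fst.comp measurable_fst).prodMk (measurable_snd.const_add θ))
    rw [noisyD, Measure.map_apply hf (hA.prod (measurableSet_singleton y))]
    -- the two pieces of the preimage
    set S1 : Set ((ℝ × Bool) × ℝ) :=
      {q | (q.1.1 ∈ A ∧ q.1.2 = y) ∧ (q.2 ≤ q.1.1 - θ ∨ u q.1.1 - θ < q.2)} with hS1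
    set S2 : Set ((ℝ × Bool) × ℝ) :=
      {q | q.1.2 = y ∧ θ + q.2 ∈ A ∧ l (θ + q.2) ≤ q.1.1 ∧ q.1.1 < θ + q.2} with hS2
    have hpre : (fun q : (ℝ × Bool) × ℝ => (respond c q.1.1 (θ + q.2), q.1.2)) ⁻¹'
        (A ×ˢ ({y} : Set Bool)) = S1 ∪ S2 := by
      ext ⟨⟨x, b⟩, η⟩
      simp only [mem_preimage, mem_prod, mem_singleton_iff, hS1, hS2, mem_union, mem_setOf_eq]
      rw [respond_eq hc_between hlu]
      by_cases hP : l (θ + η) ≤ x ∧ x < θ + η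
      · rw [if_pos hP]
        constructor
        · rintro ⟨hA', hb⟩
          exact Or.inr ⟨hb, hA', hP⟩
        · rintro (⟨⟨hxA, hb⟩, hcond⟩ | ⟨hb, hA', -⟩)
          · exfalso
            have h1 : θ + η ≤ u x := (cost_iff_u hc_between hlu hP.2).mp
              ((cost_iff_l hc_between hlu hP.2).mpr hP.1)
            rcases hcond with h | h <;> linarith [hP.2]
          · exact ⟨hA', hb⟩
      · rw [if_neg hP]
        have hcond := (stay_iff hc_between hlu x (θ + η)).mp hP
        constructor
        · rintro ⟨hxA, hb⟩
          refine Or.inl ⟨⟨hxA, hb⟩, ?_⟩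
          rcases hcond with h | h
          · exact Or.inl (by linarith)
          · exact Or.inr (by linarith)
        · rintro (⟨⟨hxA, hb⟩, -⟩ | ⟨hb, hA', hP'⟩)
          · exact ⟨hxA, hb⟩
          · exact absurd ⟨hP'.1, hP'.2⟩ hP
    have hmS1 : MeasurableSet S1 := by
      refine MeasurableSet.inter
        (((measurable_fst.comp measurable_fst) hA).inter
          ((measurable_snd.comp measurable_fst) (measurableSet_singleton y))) ?_
      refine MeasurableSet.union
        (measurableSet_le measurable_snd
          ((measurable_fst.comp measurable_fst).sub measurable_const)) ?_
      exact measurableSet_lt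
        ((hu_cont.measurable.comp (measurable_fst.comp measurable_fst)).sub measurable_const)
        measurable_snd
    have hmS2 : MeasurableSet S2 := by
      refine MeasurableSet.inter
        ((measurable_snd.comp measurable_fst) (measurableSet_singleton y))
        (MeasurableSet.inter ?_ (MeasurableSet.inter ?_ ?_))
      · exact (measurable_snd.const_add θ) hA
      · exact measurableSet_le (hl_cont.measurable.comp (measurable_snd.const_add θ))
          (measurable_fst.comp measurable_fst)
      · exact measurableSet_lt (measurable_fst.comp measurable_fst)
          (measurable_snd.const_add θ)
    have hdisj : Disjoint S1 S2 := by
      rw [Set.disjoint_left]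
      rintro ⟨⟨x, b⟩, η⟩ ⟨⟨hxA, hb⟩, hcond⟩ ⟨hb2, hA2, hl2, hlt⟩
      have h1 : θ + η ≤ u x := (cost_iff_u hc_between hlu hlt).mp
        ((cost_iff_l hc_between hlu hlt).mpr hl2)
      rcases hcond with h | h <;> linarith
    rw [hpre, measure_union hdisj hmS2]
    -- the weight function
    set W : ℝ → ℝ≥0∞ := fun x => ν {η : ℝ | η ≤ x - θ ∨ u x - θ < η} with hWdef
    have hWr : Continuous fun x : ℝ => (W x).toReal :=
      (cont_W u hu_cont (fun x => (hlu x).2.1) v hv).comp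
        (continuous_const.prodMk continuous_id)
    have hWeq : ∀ x, W x = ENNReal.ofReal ((W x).toReal) :=
      fun x => (ENNReal.ofReal_toReal (measure_ne_top ν _)).symm
    have hWm : Measurable W := by
      have h : W = fun x => ENNReal.ofReal ((W x).toReal) := funext hWeq
      rw [h]
      exact hWr.measurable.ennreal_ofReal
    have hW1 : ∀ x, (W x).toReal ≤ 1 := by
      intro x
      have h := prob_le_one (μ := ν) (s := {η : ℝ | η ≤ x - θ ∨ u x - θ < η})
      simpa using ENNReal.toReal_mono ENNReal.one_ne_top h
    -- integrability of the two density pieces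
    have hint1 : Integrable (fun x : ℝ => g y x * (W x).toReal) := by
      refine Integrable.mono (hg_int y) ((hg_cont y).mul hWr).aestronglyMeasurable
        (ae_of_all _ fun x => ?_)
      rw [Real.norm_eq_abs, Real.norm_eq_abs, abs_mul,
        abs_of_nonneg (hg_pos y x).le, abs_of_nonneg ENNReal.toReal_nonneg]
      nlinarith [hg_pos y x, hW1 x, ENNReal.toReal_nonneg (a := W x)]
    have hKcont : Continuous fun x' : ℝ => ∫ t in (l x')..x', g y t :=
      cont_primitive2 (hg_cont y) hl_cont continuous_id
    have hKbd : ∀ x' : ℝ, |∫ t in (l x')..x', g y t| ≤ ∫ t, g y t := by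
      intro x'
      rw [intervalIntegral.integral_of_le (hlu x').1.le,
        abs_of_nonneg (setIntegral_nonneg measurableSet_Ioc fun t _ => (hg_pos y t).le)]
      exact setIntegral_le_integral (hg_int y) (ae_of_all _ fun t => (hg_pos y t).le)
    have hint2 : Integrable
        (fun x' : ℝ => gaussianPDFReal 0 v (x' - θ) * ∫ t in (l x')..x', g y t) := by
      have hb : Integrable (fun x' : ℝ => gaussianPDFReal 0 v (x' - θ) * ∫ t, g y t) :=
        ((integrable_gaussianPDFReal 0 v).comp_sub_right θ).mul_const _
      refine Integrable.mono hb (((cont_gaussianPDFReal 0 v).comp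
        (continuous_id.sub continuous_const)).mul hKcont).aestronglyMeasurable
        (ae_of_all _ fun x' => ?_)
      rw [Real.norm_eq_abs, Real.norm_eq_abs, abs_mul, abs_mul,
        abs_of_nonneg (gaussianPDFReal_nonneg 0 v _)]
      exact mul_le_mul_of_nonneg_left
        ((hKbd x').trans (le_abs_self _)) (gaussianPDFReal_nonneg 0 v _)
    -- measure of S1
    have hS1m : (DB.prod ν) S1 = ENNReal.ofReal (∫ x in A, g y x * (W x).toReal) := by
      rw [Measure.prod_apply hmS1]
      have hsec : ∀ p : ℝ × Bool, ν (Prod.mk p ⁻¹' S1)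
          = Set.indicator (A ×ˢ ({y} : Set Bool)) (fun p => W p.1) p := by
        intro p
        by_cases hp : p ∈ A ×ˢ ({y} : Set Bool)
        · rw [Set.indicator_of_mem hp]
          congr 1
          ext η
          simp only [mem_preimage, hS1, mem_setOf_eq, hWdef]
          rw [mem_prod, mem_singleton_iff] at hp
          simp [hp.1, hp.2]
        · rw [Set.indicator_of_notMem hp]
          have h0 : (Prod.mk p ⁻¹' S1) = (∅ : Set ℝ) := by
            ext η
            rw [mem_prod, mem_singleton_iff] at hp
            simp only [mem_preimage, hS1, mem_setOf_eq, mem_empty_iff_false, iff_false]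
            rintro ⟨h1, -⟩
            exact hp h1
          rw [h0, measure_empty]
      rw [lintegral_congr hsec, lintegral_indicator (hA.prod (measurableSet_singleton y))]
      have hrr : DB.restrict (A ×ˢ ({y} : Set Bool))
          = (DB.restrict ((univ : Set ℝ) ×ˢ ({y} : Set Bool))).restrict (Prod.fst ⁻¹' A) := by
        rw [Measure.restrict_restrict (measurable_fst hA)]
        congr 1
        ext p
        simp only [mem_inter_iff, mem_preimage, mem_prod, mem_singleton_iff, mem_univ, true_and]
      rw [hrr, ← setLIntegral_map hA hWm measurable_fst]
      have hνy : Measure.map Prod.fst (DB.restrict ((univ : Set ℝ) ×ˢ ({y} : Set Bool)))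
          = volume.withDensity (fun x => ENNReal.ofReal (g y x)) := by
        ext s hs
        rw [Measure.map_apply measurable_fst hs, Measure.restrict_apply (measurable_fst hs)]
        have h1 : Prod.fst ⁻¹' s ∩ (univ : Set ℝ) ×ˢ ({y} : Set Bool)
            = s ×ˢ ({y} : Set Bool) := by
          ext p
          simp only [mem_inter_iff, mem_preimage, mem_prod, mem_singleton_iff, mem_univ, true_and]
        rw [h1, hDB y s hs, withDensity_apply _ hs,
          ofReal_integral_eq_lintegral_ofReal ((hg_int y).restrict)
            (ae_of_all _ fun x => (hg_pos y x).le)]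
      rw [hνy, restrict_withDensity hA,
        lintegral_withDensity_eq_lintegral_mul _ ((hg_cont y).measurable.ennreal_ofReal) hWm]
      rw [ofReal_integral_eq_lintegral_ofReal (hint1.restrict)
        (ae_of_all _ fun x => mul_nonneg (hg_pos y x).le ENNReal.toReal_nonneg)]
      refine lintegral_congr fun x => ?_
      rw [Pi.mul_apply, ENNReal.ofReal_mul (hg_pos y x).le, ← hWeq x]
    -- measure of S2
    have hS2m : (DB.prod ν) S2
        = ENNReal.ofReal (∫ x' in A, gaussianPDFReal 0 v (x' - θ) * ∫ t in (l x')..x', g y t) := by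
      rw [Measure.prod_apply_symm hmS2]
      have hsec : ∀ η : ℝ, DB ((fun p => (p, η)) ⁻¹' S2)
          = Set.indicator {η : ℝ | θ + η ∈ A}
              (fun η => ENNReal.ofReal (∫ t in (l (θ + η))..(θ + η), g y t)) η := by
        intro η
        by_cases hη : θ + η ∈ A
        · rw [Set.indicator_of_mem (show η ∈ {η : ℝ | θ + η ∈ A} from hη)]
          have h1 : ((fun p : ℝ × Bool => (p, η)) ⁻¹' S2)
              = (Ico (l (θ + η)) (θ + η)) ×ˢ ({y} : Set Bool) := by
            ext p
            simp only [mem_preimage, hS2, mem_setOf_eq, mem_prod, mem_singleton_iff, mem_Ico, hη,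
              true_and]
            tauto
          rw [h1, hDB y _ measurableSet_Ico]
          congr 1
          rw [integral_Ico_eq_integral_Ioo, ← integral_Ioc_eq_integral_Ioo,
            ← intervalIntegral.integral_of_le (hlu (θ + η)).1.le]
        · rw [Set.indicator_of_notMem (show η ∉ {η : ℝ | θ + η ∈ A} from hη)]
          have h0 : ((fun p : ℝ × Bool => (p, η)) ⁻¹' S2) = (∅ : Set (ℝ × Bool)) := by
            ext p
            simp only [mem_preimage, hS2, mem_setOf_eq, mem_empty_iff_false, iff_false]
            rintro ⟨-, h1, -⟩
            exact hη h1
          rw [h0, measure_empty]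
      have hTm : Measurable fun η : ℝ => θ + η := by fun_prop
      have hmB : MeasurableSet {η : ℝ | θ + η ∈ A} := hTm hA
      have hKm : Measurable fun η : ℝ => ENNReal.ofReal (∫ t in (l (θ + η))..(θ + η), g y t) :=
        (hKcont.comp (continuous_const.add continuous_id)).measurable.ennreal_ofReal
      rw [lintegral_congr hsec, lintegral_indicator hmB, hνdef,
        gaussianReal_of_var_ne_zero 0 hv, restrict_withDensity hmB,
        lintegral_withDensity_eq_lintegral_mul _ (measurable_gaussianPDF 0 v) hKm]
      simp only [Pi.mul_apply]
      have hmap : Measure.map (fun η : ℝ => θ + η) volume = volume :=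
        (measurePreserving_add_left volume θ).map_eq
      have hGm : Measurable fun x' : ℝ =>
          gaussianPDF 0 v (x' - θ) * ENNReal.ofReal (∫ t in (l x')..x', g y t) :=
        (((measurable_gaussianPDF 0 v).comp (measurable_id.sub measurable_const))).mul
          (hKcont.measurable.ennreal_ofReal)
      have h1 := setLIntegral_map (μ := volume) hA hGm hTm
      rw [hmap] at h1
      have h2 : ∫⁻ η in {η : ℝ | θ + η ∈ A}, gaussianPDF 0 v η
            * ENNReal.ofReal (∫ t in (l (θ + η))..(θ + η), g y t) ∂volume
          = ∫⁻ x' in A, gaussianPDF 0 v (x' - θ)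
            * ENNReal.ofReal (∫ t in (l x')..x', g y t) ∂volume := by
        rw [h1]
        refine setLIntegral_congr_fun hmB (fun η _ => ?_)
        rw [add_sub_cancel_left]
      rw [h2, ofReal_integral_eq_lintegral_ofReal (hint2.restrict)
        (ae_of_all _ fun x' => mul_nonneg (gaussianPDFReal_nonneg 0 v _)
          (by rw [intervalIntegral.integral_of_le (hlu x').1.le]
              exact setIntegral_nonneg measurableSet_Ioc fun t _ => (hg_pos y t).le))]
      refine lintegral_congr fun x' => ?_
      rw [ENNReal.ofReal_mul (gaussianPDFReal_nonneg 0 v _)]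
      rfl
    rw [hS1m, hS2m, ← ENNReal.ofReal_add
      (setIntegral_nonneg hA fun x _ => mul_nonneg (hg_pos y x).le ENNReal.toReal_nonneg)
      (setIntegral_nonneg hA fun x' _ => mul_nonneg (gaussianPDFReal_nonneg 0 v _)
        (by rw [intervalIntegral.integral_of_le (hlu x').1.le]
            exact setIntegral_nonneg measurableSet_Ioc fun t _ => (hg_pos y t).le)),
      ← integral_add hint1.restrict hint2.restrict]
    rfl
  · -- positivity
    intro y ϑ x'
    unfold nrDens
    have h1 : 0 ≤ g y x' *
        (gaussianReal 0 ⟨σ ^ 2, sq_nonneg σ⟩ {η : ℝ | η ≤ x' - ϑ ∨ u x' - ϑ < η}).toReal :=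
      mul_nonneg (hg_pos y x').le ENNReal.toReal_nonneg
    have h2 : 0 < gaussianPDFReal 0 ⟨σ ^ 2, sq_nonneg σ⟩ (x' - ϑ) :=
      gaussianPDFReal_pos _ _ _ hv
    have h3 : 0 < ∫ t in (l x')..x', g y t :=
      intervalIntegral.intervalIntegral_pos_of_pos
        ((hg_cont y).intervalIntegrable _ _) (hg_pos y) (hlu x').1
    nlinarith
  · -- continuity
    intro y
    unfold nrDens
    refine Continuous.add ?_ ?_
    · exact ((hg_cont y).comp continuous_snd).mul
        (cont_W u hu_cont (fun x => (hlu x).2.1) _ hv)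
    · exact ((cont_gaussianPDFReal 0 _).comp (continuous_snd.sub continuous_fst)).mul
        (cont_primitive2 (hg_cont y) (hl_cont.comp continuous_snd) continuous_snd)
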